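/- For all real numbers a > 0, b > 0 and r ≥ 2, one has a^r + r·a^{r−1}·b + b^r ≤ (a + b)^r. -/

import Mathlib

open Set MeasureTheory Filter

/-- The conjugate exponent `p' = p/(p-1)`. -/
noncomputable def pconj (p : ℝ) : ℝ := p / (p - 1)

/-- The constant `k(p)` from the paper. -/
noncomputable def kfun (p : ℝ) : ℝ :=
  if p < 2 then 1 / (2 ^ (pconj p - 1) - 1)
  else if p = 2 then 1
  else pconj p / (pconj p - 1 +
    (1 + pconj p * (pconj p - 1) ^ ((1 : ℝ) / (pconj p - 2)) +
      (pconj p - 1) ^ (pconj p / (pconj p - 2))) /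
    (1 + (pconj p - 1) ^ ((1 : ℝ) / (pconj p - 2))) ^ pconj p)

/-- Standing assumptions on the data `p, θ, D, H, h, g` (combustion setting). -/
structure CombSetup (p θ : ℝ) (D H h g : ℝ → ℝ) : Prop where
  hp : 1 < p
  hθ0 : 0 < θ
  hθ1 : θ < 1
  hD : ContDiffOn ℝ 1 D (Ioo 0 1)
  hDpos : ∀ v ∈ Ioo (0 : ℝ) 1, 0 < D v
  hH : ContDiffOn ℝ 1 H (Icc 0 1)
  hH0 : H 0 = 0
  hh : ContinuousOn h (Icc 0 1)
  hHd : ∀ v ∈ Icc (0 : ℝ) 1, HasDerivWithinAt H (h v) (Icc 0 1) v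
  hgc : ContinuousOn g (Icc 0 1)
  hg0 : ∀ v ∈ Icc (0 : ℝ) θ, g v = 0
  hgpos : ∀ v ∈ Ioo θ 1, 0 < g v
  hg1 : g 1 = 0
  hInt : IntegrableOn (fun v => D v ^ (pconj p - 1) * g v) (Ioo 0 1)

/-- The diffusive flux `ξ ↦ D(u(ξ)) |u'(ξ)|^{p-2} u'(ξ)`. -/
noncomputable def flux (p : ℝ) (D u : ℝ → ℝ) : ℝ → ℝ :=
  fun ξ => D (u ξ) * (|deriv u ξ| ^ (p - 2) * deriv u ξ)

/-- Solution of the traveling-wave problem with speed `c`. -/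
structure IsTWSol (p c : ℝ) (D h g : ℝ → ℝ) (u : ℝ → ℝ) : Prop where
  cont : Continuous u
  mem : ∀ ξ, u ξ ∈ Icc (0 : ℝ) 1
  smooth : ContDiffOn ℝ 1 u {ξ | u ξ ∈ Ioo (0 : ℝ) 1}
  eqn : ∀ ξ ∈ {ξ | u ξ ∈ Ioo (0 : ℝ) 1},
    HasDerivAt (flux p D u) (-(c + h (u ξ)) * deriv u ξ - g (u ξ)) ξ
  flux_cont : Continuous (fun ξ => if u ξ ∈ Ioo (0 : ℝ) 1 then flux p D u ξ else 0)
  flux_to0 : ∀ ε > 0, ∃ δ > 0, ∀ ξ, u ξ ∈ Ioo (0 : ℝ) 1 → u ξ < δ → |flux p D u ξ| < ε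
  flux_to1 : ∀ ε > 0, ∃ δ > 0, ∀ ξ, u ξ ∈ Ioo (0 : ℝ) 1 → 1 - δ < u ξ → |flux p D u ξ| < ε
  lim_bot : Tendsto u atBot (nhds 1)
  lim_top : Tendsto u atTop (nhds 0)

/-- Positive solution of the first-order problem with parameter `c`. -/
structure IsFOSol (p c : ℝ) (D h g : ℝ → ℝ) (y : ℝ → ℝ) : Prop where
  cont : ContinuousOn y (Icc 0 1)
  eqn : ∀ v ∈ Ioo (0 : ℝ) 1, HasDerivAt y
    (pconj p * ((c + h v) * (max (y v) 0) ^ (1 / p) - D v ^ (pconj p - 1) * g v)) v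
  y0 : y 0 = 0
  y1 : y 1 = 0
  pos : ∀ v ∈ Ioo (0 : ℝ) 1, 0 < y v

/-- Superadditivity of `x ↦ x^s` on nonneg reals for `s ≥ 1`. -/
lemma aux_superadd {x y s : ℝ} (hx : 0 ≤ x) (hy : 0 ≤ y) (hs : 1 ≤ s) :
    x ^ s + y ^ s ≤ (x + y) ^ s := by
  have h := NNReal.add_rpow_le_rpow_add (x.toNNReal) (y.toNNReal) hs
  have := (NNReal.coe_le_coe).2 h
  push_cast at this
  rwa [Real.coe_toNNReal _ hx, Real.coe_toNNReal _ hy] at this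

/-- Technical inequality, `r ≥ 2`.
For `a, b > 0` and `r ≥ 2`: `a^r + r a^{r-1} b + b^r ≤ (a+b)^r`. -/
theorem stmt11 (a b r : ℝ) (ha : 0 < a) (hb : 0 < b) (hr : 2 ≤ r) :
    a ^ r + r * a ^ (r - 1) * b + b ^ r ≤ (a + b) ^ r := by
  have hr0 : (0 : ℝ) < r := by linarith
  set f : ℝ → ℝ := fun x => (a + x) ^ r - r * a ^ (r - 1) * x - x ^ r with hf
  have hmono : MonotoneOn f (Ici (0 : ℝ)) := by
    apply monotoneOn_of_deriv_nonneg (convex_Ici 0)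
    · apply ContinuousOn.sub
      apply ContinuousOn.sub
      · exact ((continuous_const.add continuous_id).continuousOn).rpow_const
          (fun x _ => Or.inr hr0.le)
      · exact (continuous_const.mul continuous_id).continuousOn
      · exact continuousOn_id.rpow_const (fun x _ => Or.inr hr0.le)
    · rw [interior_Ici]
      intro x hx
      have hx0 : (0 : ℝ) < x := hx
      have h1 : HasDerivAt (fun x : ℝ => (a + x) ^ r) (r * (a + x) ^ (r - 1)) x := by
        have := (Real.hasDerivAt_rpow_const (p := r)
          (x := a + x) (Or.inl (by positivity))).comp x
          ((hasDerivAt_id x).const_add a)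
        simpa [mul_comm, Function.comp_def] using this
      have h2 : HasDerivAt (fun x : ℝ => x ^ r) (r * x ^ (r - 1)) x := by
        have := Real.hasDerivAt_rpow_const (p := r) (x := x) (Or.inl hx0.ne')
        simpa [mul_comm] using this
      exact ((h1.sub ((hasDerivAt_id x).const_mul (r * a ^ (r - 1)))).sub h2).differentiableAt.differentiableWithinAt
    · rw [interior_Ici]
      intro x hx
      have hx0 : (0 : ℝ) < x := hx
      have h1 : HasDerivAt (fun x : ℝ => (a + x) ^ r) (r * (a + x) ^ (r - 1)) x := by
        have := (Real.hasDerivAt_rpow_const (p := r)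
          (x := a + x) (Or.inl (by positivity))).comp x
          ((hasDerivAt_id x).const_add a)
        simpa [mul_comm, Function.comp_def] using this
      have h2 : HasDerivAt (fun x : ℝ => x ^ r) (r * x ^ (r - 1)) x := by
        have := Real.hasDerivAt_rpow_const (p := r) (x := x) (Or.inl hx0.ne')
        simpa [mul_comm] using this
      have hd : HasDerivAt f
          (r * (a + x) ^ (r - 1) - r * a ^ (r - 1) * 1 - r * x ^ (r - 1)) x :=
        (h1.sub ((hasDerivAt_id x).const_mul (r * a ^ (r - 1)))).sub h2
      rw [hd.deriv]
      have hsup : a ^ (r - 1) + x ^ (r - 1) ≤ (a + x) ^ (r - 1) :=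
        aux_superadd ha.le hx0.le (by linarith)
      nlinarith
  have h0 : f 0 = a ^ r := by
    simp [hf, Real.zero_rpow hr0.ne']
  have hfb : f 0 ≤ f b := hmono (show (0:ℝ) ∈ Ici 0 from le_refl (0:ℝ)) hb.le hb.le
  rw [h0] at hfb
  simp only [hf] at hfb
  linarith
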